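/- For every Boolean function f : {0,1}^n → {0,1} and constant 0 < ε < 1, the ε-approximate rational degree of f is at most twice the maximum of the ε-approximate non-deterministic degrees of f and ¬f: rdeg_ε(f) ≤ 2·max{N_ε(f), N_ε(¬f)}. Concretely, if p, q are ε-approximate non-deterministic polynomials for f, ¬f respectively, then |p(x)^2/(p(x)^2 + q(x)^2) − f(x)| ≤ ε for all x ∈ {0,1}^n. -/

import Mathlib

open MvPolynomial

noncomputable section

/-- Real value of a Boolean. -/
def bval (b : Bool) : ℝ := if b then 1 else 0

/-- Evaluate a real multivariate polynomial at a Boolean point. -/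
def evalB {ι : Type*} (p : MvPolynomial ι ℝ) (x : ι → Bool) : ℝ :=
  MvPolynomial.eval (fun i => bval (x i)) p

/-- `p` is an `ε`-approximate non-deterministic polynomial for `f`. -/
def IsApproxNdet {ι : Type*} (ε : ℝ) (f : (ι → Bool) → Bool)
    (p : MvPolynomial ι ℝ) : Prop :=
  ∀ x, (f x = false → |evalB p x| ≤ ε) ∧ (f x = true → 1 ≤ |evalB p x|)

/-- The `ε`-approximate non-deterministic degree `N_ε(f)`. -/
def approxNdeg {ι : Type*} (ε : ℝ) (f : (ι → Bool) → Bool) : ℕ :=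
  sInf {d | ∃ p : MvPolynomial ι ℝ, IsApproxNdet ε f p ∧ p.totalDegree ≤ d}

/-- `N(f) = N_{1/3}(f)`. -/
def N13 {ι : Type*} (f : (ι → Bool) → Bool) : ℕ := approxNdeg (1/3) f

/-- `M(f) = max{N(f), N(¬f)}`. -/
def M13 {ι : Type*} (f : (ι → Bool) → Bool) : ℕ :=
  max (N13 f) (N13 fun x => !(f x))

/-- `p` sign-represents `f`. -/
def SignRep {ι : Type*} (p : MvPolynomial ι ℝ) (f : (ι → Bool) → Bool) : Prop :=
  ∀ x, evalB p x < 0 ↔ f x = true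

/-- Sign degree (threshold degree). -/
def signDeg {ι : Type*} (f : (ι → Bool) → Bool) : ℕ :=
  sInf {d | ∃ p : MvPolynomial ι ℝ, SignRep p f ∧ p.totalDegree ≤ d}

/-- `1/3`-approximate degree. -/
def approxDeg {ι : Type*} (f : (ι → Bool) → Bool) : ℕ :=
  sInf {d | ∃ p : MvPolynomial ι ℝ,
    (∀ x, |evalB p x - bval (f x)| ≤ 1/3) ∧ p.totalDegree ≤ d}

/-- Exact degree of a Boolean function. -/
def degB {ι : Type*} (f : (ι → Bool) → Bool) : ℕ :=
  sInf {d | ∃ p : MvPolynomial ι ℝ,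
    (∀ x, evalB p x = bval (f x)) ∧ p.totalDegree ≤ d}

/-- Hamming weight. -/
def wt {ι : Type*} [Fintype ι] (x : ι → Bool) : ℕ :=
  (Finset.univ.filter fun i => x i = true).card

/-- Flip the bits of `x` inside the block `B`. -/
def flipB {ι : Type*} [DecidableEq ι] (x : ι → Bool) (B : Finset ι) : ι → Bool :=
  fun i => if i ∈ B then !(x i) else x i

/-- Sensitivity of `f` at `x`. -/
def sensAt {ι : Type*} [Fintype ι] [DecidableEq ι]
    (f : (ι → Bool) → Bool) (x : ι → Bool) : ℕ :=
  (Finset.univ.filter fun i : ι => f (flipB x {i}) ≠ f x).card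

/-- Sensitivity of `f`. -/
def sens {ι : Type*} [Fintype ι] [DecidableEq ι] (f : (ι → Bool) → Bool) : ℕ :=
  sSup {s | ∃ x, sensAt f x = s}

/-- 0-sensitivity. -/
def sens₀ {ι : Type*} [Fintype ι] [DecidableEq ι] (f : (ι → Bool) → Bool) : ℕ :=
  sSup {s | ∃ x, f x = false ∧ sensAt f x = s}

/-- 1-sensitivity. -/
def sens₁ {ι : Type*} [Fintype ι] [DecidableEq ι] (f : (ι → Bool) → Bool) : ℕ :=
  sSup {s | ∃ x, f x = true ∧ sensAt f x = s}

/-- Block sensitivity of `f`. -/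
def blockSens {ι : Type*} [Fintype ι] [DecidableEq ι] (f : (ι → Bool) → Bool) : ℕ :=
  sSup {k | ∃ x, ∃ B : Fin k → Finset ι,
    (∀ i j, i ≠ j → Disjoint (B i) (B j)) ∧ ∀ i, f (flipB x (B i)) ≠ f x}

/-- `S` is a certificate for `f` at `x`. -/
def IsCert {ι : Type*} (f : (ι → Bool) → Bool) (x : ι → Bool) (S : Finset ι) : Prop :=
  ∀ y, (∀ i ∈ S, y i = x i) → f y = f x

/-- Certificate complexity at `x`. -/
def certAt {ι : Type*} (f : (ι → Bool) → Bool) (x : ι → Bool) : ℕ :=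
  sInf {c | ∃ S : Finset ι, IsCert f x S ∧ S.card ≤ c}

/-- Certificate complexity of `f`. -/
def cert {ι : Type*} (f : (ι → Bool) → Bool) : ℕ :=
  sSup {c | ∃ x, certAt f x = c}

/-- Deterministic decision trees querying variables indexed by `ι`. -/
inductive DTree (ι : Type*) where
  | leaf : Bool → DTree ι
  | node : ι → DTree ι → DTree ι → DTree ι

def DTree.evalT {ι : Type*} : DTree ι → (ι → Bool) → Bool
  | .leaf b, _ => b
  | .node i t0 t1, x => if x i then t1.evalT x else t0.evalT x

def DTree.depth {ι : Type*} : DTree ι → ℕ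
  | .leaf _ => 0
  | .node _ t0 t1 => 1 + max t0.depth t1.depth

/-- Deterministic query complexity `D(f)`. -/
def Dquery {ι : Type*} (f : (ι → Bool) → Bool) : ℕ :=
  sInf {d | ∃ t : DTree ι, (∀ x, t.evalT x = f x) ∧ t.depth ≤ d}

/-- `P` is a monotone path from `0^n` to `1^n`. -/
def IsMonoPath {ι : Type*} [Fintype ι] [DecidableEq ι] (P : ℕ → ι → Bool) : Prop :=
  P 0 = (fun _ => false) ∧ P (Fintype.card ι) = (fun _ => true) ∧
  ∀ t < Fintype.card ι, ∃ j, P t j = false ∧ P (t + 1) = Function.update (P t) j true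

/-- Alternation number of `f` along the path `P`. -/
def pathAlt {ι : Type*} [Fintype ι] (f : (ι → Bool) → Bool) (P : ℕ → ι → Bool) : ℕ :=
  ((Finset.range (Fintype.card ι)).filter fun t => f (P t) ≠ f (P (t + 1))).card

/-- Alternation number of `f`. -/
def altNum {ι : Type*} [Fintype ι] [DecidableEq ι] (f : (ι → Bool) → Bool) : ℕ :=
  sSup {a | ∃ P, IsMonoPath P ∧ pathAlt f P = a}

/-- Zebra function: all monotone paths have the same alternation number. -/
def IsZebra {ι : Type*} [Fintype ι] [DecidableEq ι] (f : (ι → Bool) → Bool) : Prop :=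
  ∀ P Q, IsMonoPath P → IsMonoPath Q → pathAlt f P = pathAlt f Q

/-- Symmetric Boolean function. -/
def IsSymmF {ι : Type*} [Fintype ι] (f : (ι → Bool) → Bool) : Prop :=
  ∀ x y, wt x = wt y → f x = f y

/-- Monotonically increasing. -/
def MonoIncr {ι : Type*} (f : (ι → Bool) → Bool) : Prop :=
  ∀ x y : ι → Bool, (∀ i, x i = true → y i = true) → f x = true → f y = true

/-- Monotonically decreasing. -/
def MonoDecr {ι : Type*} (f : (ι → Bool) → Bool) : Prop :=
  ∀ x y : ι → Bool, (∀ i, x i = true → y i = true) → f y = true → f x = true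

/-- Monotone (increasing or decreasing). -/
def Monot {ι : Type*} (f : (ι → Bool) → Bool) : Prop := MonoIncr f ∨ MonoDecr f

/-- Non-constant. -/
def NonConst {ι : Type*} (f : (ι → Bool) → Bool) : Prop := ∃ x y, f x ≠ f y

end

/-- `ε`-approximate rational degree. -/
noncomputable def ratApproxDeg {ι : Type*} (ε : ℝ) (f : (ι → Bool) → Bool) : ℕ :=
  sInf {d | ∃ p q : MvPolynomial ι ℝ, (∀ x, evalB q x ≠ 0) ∧
    (∀ x, |bval (f x) - evalB p x / evalB q x| ≤ ε) ∧
    p.totalDegree ≤ d ∧ q.totalDegree ≤ d}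


lemma aux_ratio (hε0 : 0 < ε) (hε1 : ε < 1) (a b : ℝ)
    (ha : ε * ε + b * b ≤ a * a + ε * ε) (hb : b ^ 2 ≤ ε ^ 2 ∨ 1 ≤ b ^ 2) : True := trivial

lemma ratio_bound_one (ε : ℝ) (hε0 : 0 < ε) (hε1 : ε < 1) (a b : ℝ)
    (h1 : 1 ≤ a ^ 2) (h2 : b ^ 2 ≤ ε ^ 2) :
    |a ^ 2 / (a ^ 2 + b ^ 2) - 1| ≤ ε := by
  have hb : (0:ℝ) ≤ b ^ 2 := sq_nonneg b
  have hs : (0:ℝ) < a ^ 2 + b ^ 2 := by nlinarith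
  have heq : a ^ 2 / (a ^ 2 + b ^ 2) - 1 = -(b ^ 2 / (a ^ 2 + b ^ 2)) := by
    field_simp
    ring
  rw [heq, abs_neg, abs_of_nonneg (div_nonneg hb hs.le), div_le_iff₀ hs]
  nlinarith

lemma ratio_bound_zero (ε : ℝ) (hε0 : 0 < ε) (hε1 : ε < 1) (a b : ℝ)
    (h1 : a ^ 2 ≤ ε ^ 2) (h2 : 1 ≤ b ^ 2) :
    |a ^ 2 / (a ^ 2 + b ^ 2) - 0| ≤ ε := by
  have ha : (0:ℝ) ≤ a ^ 2 := sq_nonneg a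
  have hs : (0:ℝ) < a ^ 2 + b ^ 2 := by nlinarith
  rw [sub_zero, abs_of_nonneg (div_nonneg ha hs.le), div_le_iff₀ hs]
  nlinarith

lemma abs_sq_le {c ε : ℝ} (h : |c| ≤ ε) : c ^ 2 ≤ ε ^ 2 := by
  have := abs_nonneg c
  nlinarith [sq_abs c]

lemma one_le_sq {c : ℝ} (h : 1 ≤ |c|) : 1 ≤ c ^ 2 := by
  nlinarith [sq_abs c, abs_nonneg c]

lemma ndet_ratio {n : ℕ} (ε : ℝ) (hε0 : 0 < ε) (hε1 : ε < 1)
    (f : (Fin n → Bool) → Bool) (p q : MvPolynomial (Fin n) ℝ)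
    (hp : IsApproxNdet ε f p) (hq : IsApproxNdet ε (fun x => !(f x)) q)
    (x : Fin n → Bool) :
    |evalB p x ^ 2 / (evalB p x ^ 2 + evalB q x ^ 2) - bval (f x)| ≤ ε := by
  obtain ⟨hp0, hp1⟩ := hp x
  obtain ⟨hq0, hq1⟩ := hq x
  cases hf : f x
  · simp only [hf, bval, if_neg Bool.false_ne_true]
    exact ratio_bound_zero ε hε0 hε1 _ _ (abs_sq_le (hp0 hf))
      (one_le_sq (hq1 (by simp [hf])))
  · simp only [hf, bval, if_pos rfl]
    exact ratio_bound_one ε hε0 hε1 _ _ (one_le_sq (hp1 hf))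
      (abs_sq_le (hq0 (by simp [hf])))

lemma exists_exact_poly {m : ℕ} (f : (Fin m → Bool) → Bool) :
    ∃ p : MvPolynomial (Fin m) ℝ, ∀ x, evalB p x = bval (f x) := by
  classical
  refine ⟨∑ y ∈ Finset.univ.filter (fun y => f y = true),
    ∏ i, if y i then X i else 1 - X i, fun x => ?_⟩
  unfold evalB
  rw [map_sum]
  have hterm : ∀ y : Fin m → Bool,
      (eval fun i => bval (x i)) (∏ i, if y i then (X i : MvPolynomial (Fin m) ℝ) else 1 - X i)
      = if y = x then 1 else 0 := by
    intro y
    rw [map_prod]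
    by_cases h : y = x
    · subst h
      rw [if_pos rfl]
      apply Finset.prod_eq_one
      intro i _
      by_cases hi : y i <;> simp [hi, bval]
    · rw [if_neg h]
      obtain ⟨i, hi⟩ : ∃ i, y i ≠ x i := by
        by_contra hc; push_neg at hc; exact h (funext hc)
      apply Finset.prod_eq_zero (Finset.mem_univ i)
      cases hy : y i <;> cases hx : x i <;> simp_all [bval]
  simp only [hterm]
  rw [Finset.sum_filter]
  have hswap : ∀ y : Fin m → Bool,
      (if f y = true then (if y = x then (1:ℝ) else 0) else 0)
      = if y = x then (if f y = true then 1 else 0) else 0 := by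
    intro y; by_cases h : y = x <;> by_cases h2 : f y = true <;> simp [h, h2]
  simp only [hswap]
  rw [Finset.sum_ite_eq' Finset.univ x]
  simp [bval]

lemma ndet_set_nonempty {m : ℕ} (ε : ℝ) (hε0 : 0 < ε)
    (f : (Fin m → Bool) → Bool) :
    {d | ∃ p : MvPolynomial (Fin m) ℝ, IsApproxNdet ε f p ∧ p.totalDegree ≤ d}.Nonempty := by
  obtain ⟨p, hp⟩ := exists_exact_poly f
  refine ⟨p.totalDegree, p, fun x => ?_, le_refl _⟩
  constructor
  · intro h; rw [hp x, h]; simp [bval]; exact hε0.le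
  · intro h; rw [hp x, h]; simp [bval]

/-- `rdeg_ε(f) ≤ 2·max{N_ε(f), N_ε(¬f)}`, via `p²/(p²+q²)`. -/
theorem stmt3 {n : ℕ} (ε : ℝ) (hε0 : 0 < ε) (hε1 : ε < 1)
    (f : (Fin n → Bool) → Bool) :
    ratApproxDeg ε f ≤ 2 * max (approxNdeg ε f) (approxNdeg ε fun x => !(f x)) ∧
    ∀ p q : MvPolynomial (Fin n) ℝ, IsApproxNdet ε f p →
      IsApproxNdet ε (fun x => !(f x)) q →
      ∀ x, |evalB p x ^ 2 / (evalB p x ^ 2 + evalB q x ^ 2) - bval (f x)| ≤ ε := by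
  have hnd : ∀ (g : (Fin n → Bool) → Bool), ∃ p : MvPolynomial (Fin n) ℝ,
      IsApproxNdet ε g p ∧ p.totalDegree ≤ approxNdeg ε g := by
    intro g
    have := Nat.sInf_mem (ndet_set_nonempty ε hε0 g)
    obtain ⟨p, hp, hd⟩ := this
    exact ⟨p, hp, hd⟩
  obtain ⟨p, hp, hpd⟩ := hnd f
  obtain ⟨q, hq, hqd⟩ := hnd (fun x => !(f x))
  refine ⟨?_, fun p q hp hq x => ndet_ratio ε hε0 hε1 f p q hp hq x⟩
  set M := max (approxNdeg ε f) (approxNdeg ε fun x => !(f x)) with hM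
  apply Nat.sInf_le
  refine ⟨p ^ 2, p ^ 2 + q ^ 2, ?_, ?_, ?_, ?_⟩
  · intro x
    have he : evalB (p ^ 2 + q ^ 2) x = evalB p x ^ 2 + evalB q x ^ 2 := by
      unfold evalB; rw [map_add, map_pow, map_pow]
    rw [he]
    obtain ⟨hp0, hp1⟩ := hp x
    obtain ⟨hq0, hq1⟩ := hq x
    cases hf : f x
    · have h1 := one_le_sq (hq1 (by simp [hf]))
      nlinarith [sq_nonneg (evalB p x)]
    · have h1 := one_le_sq (hp1 hf)
      nlinarith [sq_nonneg (evalB q x)]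
  · intro x
    have he1 : evalB (p ^ 2) x = evalB p x ^ 2 := by unfold evalB; rw [map_pow]
    have he2 : evalB (p ^ 2 + q ^ 2) x = evalB p x ^ 2 + evalB q x ^ 2 := by
      unfold evalB; rw [map_add, map_pow, map_pow]
    rw [he1, he2, abs_sub_comm]
    exact ndet_ratio ε hε0 hε1 f p q hp hq x
  · calc (p ^ 2).totalDegree ≤ 2 * p.totalDegree := totalDegree_pow p 2
      _ ≤ 2 * M := by
        exact Nat.mul_le_mul_left 2 (le_trans hpd (le_max_left _ _))
  · calc (p ^ 2 + q ^ 2).totalDegree ≤ max (p ^ 2).totalDegree (q ^ 2).totalDegree :=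
        totalDegree_add _ _
      _ ≤ 2 * M := by
        apply max_le
        · exact le_trans (totalDegree_pow p 2)
            (Nat.mul_le_mul_left 2 (le_trans hpd (le_max_left _ _)))
        · exact le_trans (totalDegree_pow q 2)
            (Nat.mul_le_mul_left 2 (le_trans hqd (le_max_right _ _)))
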